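/- Let A(t) be an n×l real matrix function of class C¹ on [a,b] with l ≤ n, and set B(t) = A(t)ᵀA(t). Suppose det B(t) ≠ 0 for t ∈ (a,b), det B(a) ≠ 0, det B(b) = 0, and there exists h_b > 0 with det B(b+t) = h_b² t² + o(t²) as t → 0−. Fix α > 0, γ > 0, κ > 0. Then there exists λ > 0, depending only on A, α, γ and κ, such that for every continuous ℝˡ-valued function r on [a,b] satisfying ‖r‖_{i,a,b} ≥ α‖r‖_{a,b} and |A(t)r(t)| ≤ κ(b−t)‖r‖_{a,b} for t ∈ (b−γ, b], one has ‖Ar‖_{i,a,b} ≥ λ‖r‖_{i,a,b}. -/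

import Mathlib

open Set Filter Asymptotics Topology MeasureTheory Matrix

/-- Euclidean norm of a vector in `ℝˡ`. -/
noncomputable def euclNorm {l : ℕ} (v : Fin l → ℝ) : ℝ := Real.sqrt (∑ i, v i ^ 2)

lemma euclNorm_eq {l : ℕ} (v : Fin l → ℝ) :
    euclNorm v = ‖(EuclideanSpace.equiv (Fin l) ℝ).symm v‖ := by
  rw [EuclideanSpace.norm_eq]; simp [euclNorm, Real.norm_eq_abs, sq_abs]

lemma euclNorm_nonneg {l : ℕ} (v : Fin l → ℝ) : 0 ≤ euclNorm v := Real.sqrt_nonneg _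

lemma euclNorm_eq_zero {l : ℕ} {v : Fin l → ℝ} (h : euclNorm v = 0) : v = 0 := by
  rw [euclNorm_eq] at h
  have := norm_eq_zero.1 h
  have := congrArg (EuclideanSpace.equiv (Fin l) ℝ) this
  simpa using this

lemma euclNorm_smul {l : ℕ} (s : ℝ) (v : Fin l → ℝ) :
    euclNorm (s • v) = |s| * euclNorm v := by
  rw [euclNorm_eq, euclNorm_eq, _root_.map_smul, norm_smul, Real.norm_eq_abs]

lemma continuous_euclNorm {l : ℕ} : Continuous (euclNorm (l := l)) := by
  have : Continuous fun v : Fin l → ℝ => ‖(EuclideanSpace.equiv (Fin l) ℝ).symm v‖ :=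
    continuous_norm.comp (EuclideanSpace.equiv (Fin l) ℝ).symm.continuous
  simpa [funext euclNorm_eq] using this

lemma euclNorm_zero {l : ℕ} : euclNorm (0 : Fin l → ℝ) = 0 := by simp [euclNorm]

lemma exists_unif_bound {n l : ℕ} (hl : l ≠ 0) (a c : ℝ) (hac : a ≤ c)
    (A : ℝ → Matrix (Fin n) (Fin l) ℝ)
    (hAc : ∀ i j, ContinuousOn (fun t => A t i j) (Set.Icc a c))
    (hinj : ∀ t ∈ Set.Icc a c, ∀ v : Fin l → ℝ, (A t).mulVec v = 0 → v = 0) :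
    ∃ m > 0, ∀ t ∈ Set.Icc a c, ∀ v : Fin l → ℝ,
      m * euclNorm v ≤ euclNorm ((A t).mulVec v) := by
  set E := EuclideanSpace ℝ (Fin l)
  set e := EuclideanSpace.equiv (Fin l) ℝ
  set K : Set (ℝ × E) := Set.Icc a c ×ˢ Metric.sphere (0 : E) 1 with hK
  have hKc : IsCompact K := isCompact_Icc.prod (isCompact_sphere 0 1)
  have hKne : K.Nonempty := by
    refine ⟨(a, EuclideanSpace.single ⟨0, Nat.pos_of_ne_zero hl⟩ (1 : ℝ)), ⟨⟨le_refl a, hac⟩, ?_⟩⟩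
    rw [mem_sphere_iff_norm, sub_zero]
    exact (EuclideanSpace.norm_single _ _).trans norm_one
  set f : ℝ × E → ℝ := fun p => euclNorm ((A p.1).mulVec (e p.2)) with hf
  have hgc : ContinuousOn (fun p : ℝ × E => (A p.1).mulVec (e p.2)) K := by
    refine continuousOn_pi.2 fun i => ?_
    have : (fun p : ℝ × E => (A p.1).mulVec (e p.2) i) =
        fun p : ℝ × E => ∑ j, A p.1 i j * (e p.2) j := by
      funext p; rfl
    rw [this]
    refine continuousOn_finset_sum _ fun j _ => ?_
    have h1 : ContinuousOn (fun p : ℝ × E => A p.1 i j) K :=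
      (hAc i j).comp continuous_fst.continuousOn (fun p hp => hp.1)
    have h2 : Continuous (fun p : ℝ × E => (e p.2) j) :=
      (continuous_apply j).comp (e.continuous.comp continuous_snd)
    exact h1.mul h2.continuousOn
  have hfc : ContinuousOn f K := continuous_euclNorm.comp_continuousOn hgc
  obtain ⟨p0, hp0K, hmin⟩ := hKc.exists_isMinOn hKne hfc
  have hfp0 : 0 < f p0 := by
    rcases eq_or_lt_of_le (euclNorm_nonneg ((A p0.1).mulVec (e p0.2))) with h | h
    · exfalso
      have h0 : (A p0.1).mulVec (e p0.2) = 0 := euclNorm_eq_zero h.symm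
      have hv0 := hinj p0.1 hp0K.1 (e p0.2) h0
      have hv : p0.2 = 0 := by
        have := congrArg e.symm hv0
        simpa using this
      have h1 := hp0K.2
      rw [mem_sphere_iff_norm, hv] at h1
      simp at h1
    · exact h
  refine ⟨f p0, hfp0, ?_⟩
  intro t ht v
  rcases eq_or_ne v 0 with rfl | hv
  · simp [euclNorm_zero, Matrix.mulVec_zero, euclNorm_nonneg]
  · have hs : 0 < euclNorm v :=
      lt_of_le_of_ne (euclNorm_nonneg v) (fun h => hv (euclNorm_eq_zero h.symm))
    set s := euclNorm v with hsdef
    set u : Fin l → ℝ := s⁻¹ • v with hu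
    have hun : euclNorm u = 1 := by
      rw [hu, euclNorm_smul, abs_of_pos (inv_pos.2 hs)]
      field_simp
      exact hsdef.symm
    have hmem : (t, e.symm u) ∈ K := by
      refine ⟨ht, ?_⟩
      rw [mem_sphere_iff_norm, sub_zero, ← euclNorm_eq, hun]
    have hle : f p0 ≤ f (t, e.symm u) := hmin hmem
    have hfe : f (t, e.symm u) = euclNorm ((A t).mulVec u) := by
      simp [hf]
    rw [hfe] at hle
    have hmv : (A t).mulVec u = s⁻¹ • (A t).mulVec v := by
      rw [hu, Matrix.mulVec_smul]
    rw [hmv, euclNorm_smul, abs_of_pos (inv_pos.2 hs)] at hle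
    calc f p0 * s ≤ (s⁻¹ * euclNorm ((A t).mulVec v)) * s :=
          mul_le_mul_of_nonneg_right hle hs.le
      _ = euclNorm ((A t).mulVec v) := by field_simp

/-- `‖q‖_{a,b} = max_{t ∈ [a,b]} |q(t)|`. -/
noncomputable def supNorm {l : ℕ} (a b : ℝ) (q : ℝ → Fin l → ℝ) : ℝ :=
  sSup ((fun t => euclNorm (q t)) '' Set.Icc a b)

/-- `‖q‖_{i,a,b} = ∫_a^b |q(t)| dt`. -/
noncomputable def intNorm {l : ℕ} (a b : ℝ) (q : ℝ → Fin l → ℝ) : ℝ :=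
  ∫ t in a..b, euclNorm (q t)

theorem stmt9 (n l : ℕ) (hln : l ≤ n) (a b : ℝ) (hab : a < b)
    (A : ℝ → Matrix (Fin n) (Fin l) ℝ)
    (hA : ∀ i j, ContDiffOn ℝ 1 (fun t => A t i j) (Set.Icc a b))
    (B : ℝ → Matrix (Fin l) (Fin l) ℝ) (hB : ∀ t, B t = (A t)ᵀ * A t)
    (hdet : ∀ t ∈ Set.Ioo a b, (B t).det ≠ 0)
    (hdeta : (B a).det ≠ 0) (hdetb : (B b).det = 0)
    (hb : ℝ) (hhb : 0 < hb)
    (hasymb : (fun t => (B (b + t)).det - hb ^ 2 * t ^ 2) =o[𝓝[<] (0 : ℝ)] fun t => t ^ 2)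
    (α γ κ : ℝ) (hα : 0 < α) (hγ : 0 < γ) (hκ : 0 < κ) :
    ∃ lam > 0, ∀ r : ℝ → Fin l → ℝ, ContinuousOn r (Set.Icc a b) →
      intNorm a b r ≥ α * supNorm a b r →
      (∀ t, b - γ < t → t ≤ b → a ≤ t →
        euclNorm ((A t).mulVec (r t)) ≤ κ * (b - t) * supNorm a b r) →
      (∫ t in a..b, euclNorm ((A t).mulVec (r t))) ≥ lam * intNorm a b r := by
  -- case l = 0 : contradiction with det B b = 0 (empty determinant is 1)
  rcases Nat.eq_zero_or_pos l with hl0 | hlpos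
  · subst hl0
    exact absurd (hdetb ▸ (Matrix.det_isEmpty (A := B b))) (by norm_num)
  have hl : l ≠ 0 := hlpos.ne'
  -- choose δ and c
  set δ : ℝ := min (α / 2) ((b - a) / 2) with hδdef
  have hδpos : 0 < δ := lt_min (by linarith) (by linarith)
  have hδα : δ ≤ α / 2 := min_le_left _ _
  have hδba : δ ≤ (b - a) / 2 := min_le_right _ _
  set c : ℝ := b - δ with hcdef
  have hcb : c < b := by simp [hcdef]; linarith
  have hac : a < c := by simp [hcdef]; linarith
  have hsub : Set.Icc a c ⊆ Set.Icc a b := Set.Icc_subset_Icc le_rfl hcb.le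
  -- continuity of A on [a,c]
  have hAc : ∀ i j, ContinuousOn (fun t => A t i j) (Set.Icc a c) :=
    fun i j => ((hA i j).continuousOn).mono hsub
  -- injectivity of A t on [a,c]
  have hinj : ∀ t ∈ Set.Icc a c, ∀ v : Fin l → ℝ, (A t).mulVec v = 0 → v = 0 := by
    intro t ht v hv
    have hBv : (B t).mulVec v = 0 := by
      rw [hB t, ← Matrix.mulVec_mulVec, hv, Matrix.mulVec_zero]
    have hdet' : (B t).det ≠ 0 := by
      rcases eq_or_lt_of_le ht.1 with rfl | hat
      · exact hdeta
      · exact hdet t ⟨hat, lt_of_le_of_lt ht.2 hcb⟩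
    exact Matrix.eq_zero_of_mulVec_eq_zero hdet' hBv
  obtain ⟨m, hm, hbound⟩ := exists_unif_bound hl a c hac.le A hAc hinj
  refine ⟨m / 2, by positivity, ?_⟩
  intro r hr hir hnear
  set g : ℝ → ℝ := fun t => euclNorm (r t) with hgdef
  set fA : ℝ → ℝ := fun t => euclNorm ((A t).mulVec (r t)) with hfAdef
  have hgc : ContinuousOn g (Set.Icc a b) := continuous_euclNorm.comp_continuousOn hr
  have hfAc : ContinuousOn fA (Set.Icc a b) := by
    refine continuous_euclNorm.comp_continuousOn ?_
    refine continuousOn_pi.2 fun i => ?_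
    have : (fun t => (A t).mulVec (r t) i) = fun t => ∑ j, A t i j * r t j := by
      funext t; rfl
    rw [this]
    refine continuousOn_finset_sum _ fun j _ => ?_
    exact ((hA i j).continuousOn).mul ((continuous_apply j).comp_continuousOn hr)
  -- interval integrability
  have hgint : IntervalIntegrable g MeasureTheory.volume a b :=
    ContinuousOn.intervalIntegrable (by rwa [Set.uIcc_of_le hab.le])
  have hgint_ac : IntervalIntegrable g MeasureTheory.volume a c :=
    ContinuousOn.intervalIntegrable (by rw [Set.uIcc_of_le hac.le]; exact hgc.mono hsub)
  have hgint_cb : IntervalIntegrable g MeasureTheory.volume c b :=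
    ContinuousOn.intervalIntegrable
      (by rw [Set.uIcc_of_le hcb.le]; exact hgc.mono (Set.Icc_subset_Icc hac.le le_rfl))
  have hfAint_ac : IntervalIntegrable fA MeasureTheory.volume a c :=
    ContinuousOn.intervalIntegrable (by rw [Set.uIcc_of_le hac.le]; exact hfAc.mono hsub)
  have hfAint_cb : IntervalIntegrable fA MeasureTheory.volume c b :=
    ContinuousOn.intervalIntegrable
      (by rw [Set.uIcc_of_le hcb.le]; exact hfAc.mono (Set.Icc_subset_Icc hac.le le_rfl))
  -- sup norm bound
  set M : ℝ := supNorm a b r with hMdef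
  have hbdd : BddAbove (g '' Set.Icc a b) :=
    (isCompact_Icc.image_of_continuousOn hgc).bddAbove
  have hgM : ∀ t ∈ Set.Icc a b, g t ≤ M := fun t ht => le_csSup hbdd ⟨t, ht, rfl⟩
  have hM0 : 0 ≤ M := le_trans (euclNorm_nonneg (r a)) (hgM a ⟨le_rfl, hab.le⟩)
  -- splitting the integral of g
  have hsplit : intNorm a b r = (∫ t in a..c, g t) + ∫ t in c..b, g t :=
    (intervalIntegral.integral_add_adjacent_intervals hgint_ac hgint_cb).symm
  have htail : (∫ t in c..b, g t) ≤ δ * M := by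
    have h1 : (∫ t in c..b, g t) ≤ ∫ t in c..b, M :=
      intervalIntegral.integral_mono_on hcb.le hgint_cb intervalIntegrable_const
        (fun t ht => hgM t ⟨le_trans hac.le ht.1, ht.2⟩)
    have h2 : (∫ t in c..b, (M : ℝ)) = δ * M := by
      rw [intervalIntegral.integral_const, smul_eq_mul]
      congr 1
      simp [hcdef]
    linarith
  have hirM : α * M ≤ intNorm a b r := hir
  have hhalf : intNorm a b r / 2 ≤ ∫ t in a..c, g t := by
    have hδM : δ * M ≤ (α / 2) * M := mul_le_mul_of_nonneg_right hδα hM0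
    nlinarith
  -- main estimate
  have hmain : m * ∫ t in a..c, g t ≤ ∫ t in a..c, fA t := by
    have h1 : (∫ t in a..c, m * g t) ≤ ∫ t in a..c, fA t :=
      intervalIntegral.integral_mono_on hac.le (hgint_ac.const_mul m) hfAint_ac
        (fun t ht => hbound t ht (r t))
    rwa [intervalIntegral.integral_const_mul] at h1
  have hfAsplit : (∫ t in a..b, euclNorm ((A t).mulVec (r t))) =
      (∫ t in a..c, fA t) + ∫ t in c..b, fA t :=
    (intervalIntegral.integral_add_adjacent_intervals hfAint_ac hfAint_cb).symm
  have hfAtail : 0 ≤ ∫ t in c..b, fA t :=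
    intervalIntegral.integral_nonneg hcb.le (fun t _ => euclNorm_nonneg _)
  have hgac0 : 0 ≤ ∫ t in a..c, g t :=
    intervalIntegral.integral_nonneg hac.le (fun t _ => euclNorm_nonneg _)
  have hfin : m * (intNorm a b r / 2) ≤ m * ∫ t in a..c, g t :=
    mul_le_mul_of_nonneg_left hhalf hm.le
  rw [hfAsplit]
  have : m * (intNorm a b r / 2) = (m / 2) * intNorm a b r := by ring
  linarith
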